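/- Let (X, δ) be a diversity. The map κ sending each x ∈ X to the function h_x (where h_x(A) = δ(A ∪ {x}) for finite A ⊆ X) maps X into T_X, is injective, and satisfies δ_T(κ(Y)) = δ(Y) for every finite Y ⊆ X; that is, κ is an embedding of (X, δ) into (T_X, δ_T). -/

import Mathlib

open scoped Classical

noncomputable section

/-- A diversity: axioms (D1) and (D2). -/
def IsDiversity {X : Type*} (δ : Finset X → ℝ) : Prop :=
  (∀ A, 0 ≤ δ A) ∧ (∀ A, δ A = 0 ↔ A.card ≤ 1) ∧
    ∀ A B C : Finset X, B ≠ ∅ → δ (A ∪ C) ≤ δ (A ∪ B) + δ (B ∪ C)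

/-- Membership in `P_X`: `f ∅ = 0` and `Σ_{A ∈ 𝓐} f A ≥ δ (⋃ 𝓐)` for every finite
collection `𝓐` of finite subsets of `X`. -/
def MemP {X : Type*} (δ : Finset X → ℝ) (f : Finset X → ℝ) : Prop :=
  f ∅ = 0 ∧ ∀ 𝓐 : Finset (Finset X), δ (𝓐.sup id) ≤ ∑ A ∈ 𝓐, f A

/-- Membership in the tight span `T_X`: the pointwise-minimal elements of `P_X`. -/
def MemT {X : Type*} (δ : Finset X → ℝ) (f : Finset X → ℝ) : Prop :=
  MemP δ f ∧ ∀ g : Finset X → ℝ, MemP δ g → (∀ A, g A ≤ f A) → g = f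

/-- The function `δ_T` on finite subsets of the tight span: `δ_T ∅ = 0` and for nonempty `F`,
`δ_T F = sup { δ(⋃𝓐) - Σ_{A ∈ 𝓐} inf_{f ∈ F} f A : 𝓐 a finite collection of finite subsets }`. -/
noncomputable def deltaT {X : Type*} (δ : Finset X → ℝ) (F : Finset (Finset X → ℝ)) : ℝ :=
  if F = ∅ then 0
  else sSup {r : ℝ | ∃ 𝓐 : Finset (Finset X),
    r = δ (𝓐.sup id) - ∑ A ∈ 𝓐, sInf ((fun f => f A) '' (F : Set (Finset X → ℝ)))}

/-- The Kuratowski-type map `κ` sends `x` to the function `h_x : A ↦ δ (A ∪ {x})`. -/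
def hfun {X : Type*} (δ : Finset X → ℝ) (x : X) : Finset X → ℝ :=
  fun A => δ (A ∪ {x})

section Aux
variable {X : Type*} {δ : Finset X → ℝ}

lemma div_singleton (hδ : IsDiversity δ) (x : X) : δ {x} = 0 := (hδ.2.1 _).mpr (by simp)

lemma div_empty (hδ : IsDiversity δ) : δ (∅ : Finset X) = 0 := (hδ.2.1 _).mpr (by simp)

lemma div_insert_le (hδ : IsDiversity δ) (A : Finset X) (b : X) : δ A ≤ δ (insert b A) := by
  have h := hδ.2.2 A {b} ∅ (by simp)
  simp only [Finset.union_empty] at h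
  rw [div_singleton hδ] at h
  rw [Finset.insert_eq, Finset.union_comm]
  linarith

lemma div_union_le_left (hδ : IsDiversity δ) (A C : Finset X) : δ A ≤ δ (A ∪ C) := by
  induction C using Finset.induction with
  | empty => simp
  | @insert c C hc ih =>
    rw [Finset.union_insert]
    exact le_trans ih (div_insert_le hδ _ _)

lemma div_mono (hδ : IsDiversity δ) {A B : Finset X} (h : A ⊆ B) : δ A ≤ δ B := by
  have := div_union_le_left hδ A B
  rwa [Finset.union_eq_right.mpr h] at this

/-- Key inequality 1: `δ(⋃𝓐 ∪ {x}) ≤ Σ_{A∈𝓐} δ(A ∪ {x})`. -/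
lemma key1 (hδ : IsDiversity δ) (x : X) (𝓐 : Finset (Finset X)) :
    δ (𝓐.sup id ∪ {x}) ≤ ∑ A ∈ 𝓐, δ (A ∪ {x}) := by
  induction 𝓐 using Finset.induction with
  | empty => simp [div_singleton hδ]
  | @insert A 𝓑 hA ih =>
    rw [Finset.sup_insert, Finset.sum_insert hA]
    have tri := hδ.2.2 A {x} (𝓑.sup id ∪ {x}) (by simp)
    have e1 : ({x} : Finset X) ∪ (𝓑.sup id ∪ {x}) = 𝓑.sup id ∪ {x} := by
      rw [Finset.union_eq_right]
      exact Finset.subset_union_right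
    rw [e1] at tri
    have e2 : (id A ⊔ 𝓑.sup id) ∪ {x} = A ∪ (𝓑.sup id ∪ {x}) := by
      rw [Finset.sup_eq_union, Finset.union_assoc]; rfl
    rw [e2]
    linarith

lemma memP_ge {g : Finset X → ℝ} (hg : MemP δ g) (A : Finset X) : δ A ≤ g A := by
  simpa using hg.2 {A}

lemma hfun_memP (hδ : IsDiversity δ) (x : X) : MemP δ (hfun δ x) := by
  constructor
  · have : (∅ : Finset X) ∪ {x} = {x} := by simp
    simp only [hfun, this, div_singleton hδ]
  · intro 𝓐
    calc δ (𝓐.sup id) ≤ δ (𝓐.sup id ∪ {x}) := div_union_le_left hδ _ _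
    _ ≤ ∑ A ∈ 𝓐, δ (A ∪ {x}) := key1 hδ x 𝓐
    _ = ∑ A ∈ 𝓐, hfun δ x A := rfl

lemma hfun_memT (hδ : IsDiversity δ) (x : X) : MemT δ (hfun δ x) := by
  refine ⟨hfun_memP hδ x, ?_⟩
  intro g hg hle
  have hx0 : δ ({x} : Finset X) = 0 := div_singleton hδ x
  have hgx0 : g {x} = 0 := by
    have h1 : δ ({x} : Finset X) ≤ g {x} := memP_ge hg {x}
    have h2 : g {x} ≤ hfun δ x {x} := hle {x}
    have h3 : hfun δ x {x} = 0 := by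
      simp only [hfun, Finset.union_self]; exact hx0
    linarith
  funext A
  have h1 : δ (A ∪ {x}) ≤ g A + g {x} := by
    by_cases hA : A = {x}
    · subst hA
      rw [Finset.union_self]
      rw [hx0]
      have := memP_ge hg {x}
      have h0 := hδ.1 ({x} : Finset X)
      linarith
    · have := hg.2 ({A, {x}} : Finset (Finset X))
      rw [Finset.sup_insert, Finset.sum_insert (by simpa using hA)] at this
      simpa using this
  have h2 : g A ≤ hfun δ x A := hle A
  have h3 : hfun δ x A = δ (A ∪ {x}) := rfl
  rw [h3]
  linarith

lemma hfun_inj (hδ : IsDiversity δ) : Function.Injective (hfun δ) := by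
  intro x y h
  have h1 : hfun δ x {y} = hfun δ y {y} := congrFun h {y}
  have h2 : δ ({y} ∪ {x} : Finset X) = 0 := by
    have : hfun δ y {y} = 0 := by
      simp only [hfun, Finset.union_self]; exact div_singleton hδ y
    rw [← this]; exact h1
  have hcard := (hδ.2.1 _).mp h2
  have hx : x ∈ ({y} ∪ {x} : Finset X) := by simp
  have hy : y ∈ ({y} ∪ {x} : Finset X) := by simp
  exact Finset.card_le_one.mp hcard x hx y hy

/-- Key inequality 2: with a choice of points `c A ∈ Y`,
`δ(⋃𝓐 ∪ Y) ≤ δ Y + Σ_{A∈𝓐} δ(A ∪ {c A})`. -/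
lemma key2 (hδ : IsDiversity δ) (Y : Finset X) (c : Finset X → X) (hc : ∀ A, c A ∈ Y)
    (𝓐 : Finset (Finset X)) :
    δ (𝓐.sup id ∪ Y) ≤ δ Y + ∑ A ∈ 𝓐, δ (A ∪ {c A}) := by
  induction 𝓐 using Finset.induction with
  | empty => simp
  | @insert A 𝓑 hA ih =>
    rw [Finset.sup_insert, Finset.sum_insert hA]
    have tri := hδ.2.2 A {c A} (𝓑.sup id ∪ Y) (by simp)
    have e1 : ({c A} : Finset X) ∪ (𝓑.sup id ∪ Y) = 𝓑.sup id ∪ Y := by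
      rw [Finset.union_eq_right]
      intro z hz
      simp only [Finset.mem_singleton] at hz
      subst hz
      exact Finset.mem_union_right _ (hc A)
    rw [e1] at tri
    have e2 : (id A ⊔ 𝓑.sup id) ∪ Y = A ∪ (𝓑.sup id ∪ Y) := by
      rw [Finset.sup_eq_union, Finset.union_assoc]; rfl
    rw [e2]
    linarith

end Aux

/-- `κ : x ↦ h_x` maps `X` into `T_X`, is injective, and satisfies
`δ_T (κ(Y)) = δ Y` for every finite `Y ⊆ X`; i.e. `κ` embeds `(X, δ)` into `(T_X, δ_T)`. -/
theorem kappa_embedding {X : Type*} (δ : Finset X → ℝ) (hδ : IsDiversity δ) :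
    (∀ x : X, MemT δ (hfun δ x)) ∧
    Function.Injective (hfun δ) ∧
    (∀ Y : Finset X, deltaT δ (Y.image (hfun δ)) = δ Y) := by
  refine ⟨hfun_memT hδ, hfun_inj hδ, ?_⟩
  intro Y
  rcases eq_or_ne Y ∅ with hY | hY
  · subst hY
    simp [deltaT, div_empty hδ]
  · have hYne : Y.Nonempty := Finset.nonempty_iff_ne_empty.mpr hY
    have hFne : Y.image (hfun δ) ≠ ∅ := by
      simp [Finset.image_eq_empty, hY]
    rw [deltaT, if_neg hFne]
    -- rewrite the inf-sets
    have himg : ∀ A : Finset X,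
        ((fun f => f A) '' ((Y.image (hfun δ) : Finset (Finset X → ℝ)) : Set (Finset X → ℝ)))
          = (fun x => δ (A ∪ {x})) '' (Y : Set X) := by
      intro A
      rw [Finset.coe_image, ← Set.image_comp]
      rfl
    set I : Finset X → ℝ := fun A =>
      sInf ((fun f => f A) '' ((Y.image (hfun δ) : Finset (Finset X → ℝ)) : Set (Finset X → ℝ)))
      with hI
    have hne : ∀ A : Finset X, ((fun x => δ (A ∪ {x})) '' (Y : Set X)).Nonempty := by
      intro A
      exact (Finset.coe_nonempty.mpr hYne).image _
    have hbdd : ∀ A : Finset X, BddBelow ((fun x => δ (A ∪ {x})) '' (Y : Set X)) := by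
      intro A
      refine ⟨0, ?_⟩
      rintro r ⟨x, -, rfl⟩
      exact hδ.1 _
    -- minimizers
    choose c hcY hcmin using fun A : Finset X =>
      Y.exists_min_image (fun x => δ (A ∪ {x})) hYne
    have hIlb : ∀ A : Finset X, δ (A ∪ {c A}) ≤ I A := by
      intro A
      rw [hI]
      simp only [himg A]
      apply le_csInf (hne A)
      rintro r ⟨x, hx, rfl⟩
      exact hcmin A x hx
    -- upper bound
    have hub : ∀ r ∈ {r : ℝ | ∃ 𝓐 : Finset (Finset X),
        r = δ (𝓐.sup id) - ∑ A ∈ 𝓐, I A}, r ≤ δ Y := by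
      rintro r ⟨𝓐, rfl⟩
      have h1 : δ (𝓐.sup id) ≤ δ (𝓐.sup id ∪ Y) := div_union_le_left hδ _ _
      have h2 := key2 hδ Y c hcY 𝓐
      have h3 : ∑ A ∈ 𝓐, δ (A ∪ {c A}) ≤ ∑ A ∈ 𝓐, I A :=
        Finset.sum_le_sum fun A _ => hIlb A
      linarith
    -- membership: 𝓐 = singletons of Y
    have hmem : δ Y ∈ {r : ℝ | ∃ 𝓐 : Finset (Finset X),
        r = δ (𝓐.sup id) - ∑ A ∈ 𝓐, I A} := by
      refine ⟨Y.image (fun y => ({y} : Finset X)), ?_⟩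
      have hsup : (Y.image (fun y => ({y} : Finset X))).sup id = Y := by
        rw [Finset.sup_image]
        exact Finset.sup_singleton_eq_self Y
      have hzero : ∀ B ∈ Y.image (fun y => ({y} : Finset X)), I B = 0 := by
        intro B hB
        rw [Finset.mem_image] at hB
        obtain ⟨y, hyY, rfl⟩ := hB
        rw [hI]
        simp only [himg]
        apply le_antisymm
        · apply csInf_le (hbdd _)
          exact ⟨y, by simpa using hyY, by simp [div_singleton hδ]⟩
        · apply le_csInf (hne _)
          rintro r ⟨x, -, rfl⟩
          exact hδ.1 _
      rw [hsup, Finset.sum_eq_zero hzero]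
      ring
    apply le_antisymm
    · exact csSup_le ⟨δ Y, hmem⟩ hub
    · exact le_csSup ⟨δ Y, hub⟩ hmem

end
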